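/- If 0 → X′ → X → X″ → 0 is a pure exact sequence of left R-modules, then the Pontryagin dual sequence 0 → (X″)^∨ → X^∨ → (X′)^∨ → 0 of right R-modules is split exact. -/

import Mathlib

universe u

open TensorProduct CategoryTheory DirectSum

noncomputable section

/-- The submodule of relations presenting the tensor product `Q ⊗_R M` as a quotient of
`Q ⊗_ℤ M`, for a right `R`-module `Q` and a left `R`-module `M`. -/
def tensorRelations (R : Type u) [Ring R] (Q : Type u) [AddCommGroup Q] [Module Rᵐᵒᵖ Q]
    (M : Type u) [AddCommGroup M] [Module R M] : Submodule ℤ (TensorProduct ℤ Q M) :=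
  Submodule.span ℤ
    {x | ∃ (q : Q) (r : R) (m : M), x = (MulOpposite.op r • q) ⊗ₜ[ℤ] m - q ⊗ₜ[ℤ] (r • m)}

/-- The map `Q ⊗_R M → Q ⊗_R N` induced by `f` is injective, where `Q ⊗_R -` is realized
as the quotient of `Q ⊗_ℤ -` by `tensorRelations`. -/
def StaysInjective (R : Type u) [Ring R] (Q : Type u) [AddCommGroup Q] [Module Rᵐᵒᵖ Q]
    {M N : Type u} [AddCommGroup M] [Module R M] [AddCommGroup N] [Module R N]
    (f : M →ₗ[R] N) : Prop :=
  ∀ z : TensorProduct ℤ Q M,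
    LinearMap.lTensor Q f.toAddMonoidHom.toIntLinearMap z ∈ tensorRelations R Q N →
      z ∈ tensorRelations R Q M

/-- `f` is a pure monomorphism of left `R`-modules: it is injective and stays injective
after tensoring with every right `R`-module. -/
def IsPureMono (R : Type u) [Ring R] {M N : Type u} [AddCommGroup M] [Module R M]
    [AddCommGroup N] [Module R N] (f : M →ₗ[R] N) : Prop :=
  Function.Injective f ∧
    ∀ (Q : Type u) [AddCommGroup Q] [Module Rᵐᵒᵖ Q], StaysInjective R Q f

/-- `N` is a pure submodule of `M`. -/
def IsPureSubmodule (R : Type u) [Ring R] {M : Type u} [AddCommGroup M] [Module R M]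
    (N : Submodule R M) : Prop :=
  IsPureMono R N.subtype

/-- `0 → M' → M → M'' → 0` is a pure exact sequence of left `R`-modules. -/
def IsPureExactSeq (R : Type u) [Ring R] {M' M M'' : Type u}
    [AddCommGroup M'] [Module R M'] [AddCommGroup M] [Module R M]
    [AddCommGroup M''] [Module R M'']
    (f : M' →ₗ[R] M) (g : M →ₗ[R] M'') : Prop :=
  Function.Surjective g ∧ Function.Exact f g ∧ IsPureMono R f

/-- The right `R`-module structure on the Pontryagin dual `Hom_ℤ(X, ℚ/ℤ)` of a left
`R`-module `X`, given by `(φ • r) x = φ (r • x)`. -/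
instance pdualModule (R : Type u) [Ring R] (X : Type u) [AddCommGroup X] [Module R X] :
    Module Rᵐᵒᵖ (X →+ AddCircle (1 : ℚ)) :=
  inferInstanceAs (Module Rᵈᵐᵃ (X →+ AddCircle (1 : ℚ)))

/-- The Pontryagin dual of an `R`-linear map of left `R`-modules, as a map of
right `R`-modules. -/
def pdualMap (R : Type u) [Ring R] {M N : Type u} [AddCommGroup M] [Module R M]
    [AddCommGroup N] [Module R N] (f : M →ₗ[R] N) :
    (N →+ AddCircle (1 : ℚ)) →ₗ[Rᵐᵒᵖ] (M →+ AddCircle (1 : ℚ)) where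
  toFun φ := φ.comp f.toAddMonoidHom
  map_add' φ ψ := by ext x; rfl
  map_smul' r φ := by ext x; exact (congrArg φ (f.map_smul r.unop x)).symm


private lemma descend_exists {X X'' : Type u} [AddCommGroup X] [AddCommGroup X'']
    (g : X →+ X'') (hg : Function.Surjective g) (θ : X →+ AddCircle (1 : ℚ))
    (hθ : ∀ x, g x = 0 → θ x = 0) :
    ∃ ψ : X'' →+ AddCircle (1 : ℚ), ψ.comp g = θ := by
  classical
  have key : ∀ x y, g x = g y → θ x = θ y := by
    intro x y h
    have h0 : θ (x - y) = 0 := hθ _ (by simp [map_sub, h])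
    rw [map_sub, sub_eq_zero] at h0
    exact h0
  refine ⟨{ toFun := fun y => θ (Function.surjInv hg y), map_zero' := ?_, map_add' := ?_ }, ?_⟩
  · have : g (Function.surjInv hg 0) = g 0 := by
      simp [Function.surjInv_eq hg]
    simpa using key _ _ this
  · intro a b
    have : g (Function.surjInv hg (a + b))
        = g (Function.surjInv hg a + Function.surjInv hg b) := by
      simp [Function.surjInv_eq hg]
    simpa [map_add] using key _ _ this
  · ext x
    exact key _ _ (by simp [Function.surjInv_eq hg])

private lemma comp_cancel {X X'' : Type u} [AddCommGroup X] [AddCommGroup X'']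
    (g : X →+ X'') (hg : Function.Surjective g) {ψ₁ ψ₂ : X'' →+ AddCircle (1 : ℚ)}
    (h : ψ₁.comp g = ψ₂.comp g) : ψ₁ = ψ₂ := by
  ext y
  obtain ⟨x, rfl⟩ := hg y
  exact DFunLike.congr_fun h x

private lemma exists_section (R : Type u) [Ring R] {X' X : Type u}
    [AddCommGroup X'] [Module R X'] [AddCommGroup X] [Module R X]
    (f : X' →ₗ[R] X) (hstay : StaysInjective R (X' →+ AddCircle (1 : ℚ)) f) :
    ∃ σ : (X' →+ AddCircle (1 : ℚ)) →ₗ[Rᵐᵒᵖ] (X →+ AddCircle (1 : ℚ)),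
      pdualMap R f ∘ₗ σ = LinearMap.id := by
  classical
  set Q : Type u := X' →+ AddCircle (1 : ℚ) with hQ
  -- the evaluation map `Q ⊗ℤ X' → ℚ/ℤ`
  let e : TensorProduct ℤ Q X' →+ AddCircle (1 : ℚ) :=
    TensorProduct.liftAddHom (AddMonoidHom.id Q)
      (fun n φ x' => by
        show (n • φ) x' = φ (n • x')
        rw [AddMonoidHom.smul_apply, map_zsmul])
  have e_tmul : ∀ (φ : Q) (x' : X'), e (φ ⊗ₜ[ℤ] x') = φ x' := fun φ x' => rfl
  have e_kill : ∀ z ∈ tensorRelations R Q X', e z = 0 := by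
    intro z hz
    refine Submodule.span_induction ?_ (map_zero e) (fun a b _ _ ha hb => by
      rw [map_add, ha, hb, add_zero]) (fun n a _ ha => by rw [map_zsmul, ha, smul_zero]) hz
    rintro x ⟨q, r, m, rfl⟩
    rw [map_sub, e_tmul, e_tmul]
    show q (r • m) - q (r • m) = 0
    exact sub_self _
  let j : TensorProduct ℤ Q X' →ₗ[ℤ] TensorProduct ℤ Q X :=
    LinearMap.lTensor Q f.toAddMonoidHom.toIntLinearMap
  let π := (tensorRelations R Q X).mkQ
  let p := π ∘ₗ j
  have hker : LinearMap.ker p ≤ LinearMap.ker e.toIntLinearMap := by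
    intro z hz
    have hjz : j z ∈ tensorRelations R Q X := by
      have : π (j z) = 0 := hz
      rwa [Submodule.mkQ_apply, Submodule.Quotient.mk_eq_zero] at this
    exact e_kill z (hstay z hjz)
  let ebar0 := Submodule.liftQ (LinearMap.ker p) e.toIntLinearMap hker
  let ebar := ebar0 ∘ₗ p.quotKerEquivRange.symm.toLinearMap
  have hebar : ∀ z, ebar ⟨p z, ⟨z, rfl⟩⟩ = e z := by
    intro z
    show ebar0 (p.quotKerEquivRange.symm ⟨p z, ⟨z, rfl⟩⟩) = e z
    exact (congrArg ebar0 (LinearMap.quotKerEquivRange_symm_apply_image p z (LinearMap.mem_range_self p z))).trans rfl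
  obtain ⟨E', hE'⟩ := (Module.Baer.of_divisible (AddCircle (1 : ℚ))).extension_property
    (LinearMap.range p).subtype (Submodule.injective_subtype _) ebar
  let E := E' ∘ₗ π
  have hE1 : ∀ z, E (j z) = e z := by
    intro z
    have h1 : E (j z) = E' ((LinearMap.range p).subtype ⟨p z, ⟨z, rfl⟩⟩) := rfl
    rw [h1, ← hebar z]
    exact DFunLike.congr_fun hE' ⟨p z, ⟨z, rfl⟩⟩
  have hE2 : ∀ w ∈ tensorRelations R Q X, E w = 0 := by
    intro w hw
    show E' (π w) = 0
    have : π w = 0 := by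
      rw [Submodule.mkQ_apply, Submodule.Quotient.mk_eq_zero]
      exact hw
    rw [this, map_zero]
  refine ⟨{ toFun := fun φ => (E ∘ₗ TensorProduct.mk ℤ Q X φ).toAddMonoidHom,
            map_add' := ?_, map_smul' := ?_ }, ?_⟩
  · intro φ ψ
    ext x
    show E ((φ + ψ) ⊗ₜ[ℤ] x) = E (φ ⊗ₜ[ℤ] x) + E (ψ ⊗ₜ[ℤ] x)
    rw [TensorProduct.add_tmul, map_add]
  · intro r φ
    ext x
    show E ((r • φ) ⊗ₜ[ℤ] x) = E (φ ⊗ₜ[ℤ] (MulOpposite.unop r • x))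
    have hrel : (MulOpposite.op (MulOpposite.unop r) • φ) ⊗ₜ[ℤ] x
        - φ ⊗ₜ[ℤ] (MulOpposite.unop r • x) ∈ tensorRelations R Q X :=
      Submodule.subset_span ⟨φ, MulOpposite.unop r, x, rfl⟩
    have h0 := hE2 _ hrel
    rw [map_sub, sub_eq_zero, MulOpposite.op_unop] at h0
    exact h0
  · ext φ x'
    show E (φ ⊗ₜ[ℤ] (f x')) = φ x'
    have : (φ ⊗ₜ[ℤ] (f x') : TensorProduct ℤ Q X) = j (φ ⊗ₜ[ℤ] x') := rfl
    rw [this, hE1, e_tmul]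

/-- If `0 → X' → X → X'' → 0` is a pure exact sequence of left `R`-modules, then the
Pontryagin dual sequence `0 → (X'')^∨ → X^∨ → (X')^∨ → 0` of right `R`-modules is split
exact. -/
theorem stmt8 (R : Type u) [Ring R] (X' X X'' : Type u)
    [AddCommGroup X'] [Module R X'] [AddCommGroup X] [Module R X]
    [AddCommGroup X''] [Module R X'']
    (f : X' →ₗ[R] X) (g : X →ₗ[R] X'') (hpure : IsPureExactSeq R f g) :
    Function.Injective (pdualMap R g) ∧
    Function.Exact (pdualMap R g) (pdualMap R f) ∧
    Function.Surjective (pdualMap R f) ∧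
    (∃ σ : (X' →+ AddCircle (1 : ℚ)) →ₗ[Rᵐᵒᵖ] (X →+ AddCircle (1 : ℚ)),
      pdualMap R f ∘ₗ σ = LinearMap.id) ∧
    (∃ ρ : (X →+ AddCircle (1 : ℚ)) →ₗ[Rᵐᵒᵖ] (X'' →+ AddCircle (1 : ℚ)),
      ρ ∘ₗ pdualMap R g = LinearMap.id) := by
  classical
  obtain ⟨hg, hex, hfinj, hstayAll⟩ := hpure
  obtain ⟨σ, hσ⟩ := exists_section R f (hstayAll (X' →+ AddCircle (1 : ℚ)))
  have hσ' : ∀ φ, pdualMap R f (σ φ) = φ := fun φ => DFunLike.congr_fun hσ φ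
  have hg' : Function.Surjective (⇑g.toAddMonoidHom) := hg
  have hgf : ∀ x', g (f x') = 0 := fun x' => (hex (f x')).2 ⟨x', rfl⟩
  have hker : ∀ (θ : X →+ AddCircle (1 : ℚ)),
      (∀ x', θ (f x') = 0) → ∀ x, g x = 0 → θ x = 0 := by
    intro θ hθ x hx
    obtain ⟨x', rfl⟩ := (hex x).1 hx
    exact hθ x'
  have hinj : Function.Injective (pdualMap R g) := by
    intro φ ψ h
    exact comp_cancel g.toAddMonoidHom hg' h
  have hdualgf : ∀ ψ : X'' →+ AddCircle (1 : ℚ),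
      pdualMap R f (pdualMap R g ψ) = 0 := by
    intro ψ
    ext x'
    show ψ (g (f x')) = 0
    rw [hgf, map_zero]
  refine ⟨hinj, ?_, fun φ => ⟨σ φ, hσ' φ⟩, ⟨σ, hσ⟩, ?_⟩
  · -- exactness
    intro φ
    constructor
    · intro h0
      have : ∀ x', φ (f x') = 0 := fun x' => DFunLike.congr_fun h0 x'
      obtain ⟨ψ, hψ⟩ := descend_exists g.toAddMonoidHom hg' φ (hker φ this)
      exact ⟨ψ, hψ⟩
    · rintro ⟨ψ, rfl⟩
      exact hdualgf ψ
  · -- the retraction ρ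
    let T : (X →+ AddCircle (1 : ℚ)) →ₗ[Rᵐᵒᵖ] (X →+ AddCircle (1 : ℚ)) :=
      LinearMap.id - σ ∘ₗ pdualMap R f
    have hT : ∀ φ x', (T φ) (f x') = 0 := by
      intro φ x'
      show φ (f x') - (σ (pdualMap R f φ)) (f x') = 0
      have : (σ (pdualMap R f φ)) (f x') = (pdualMap R f (σ (pdualMap R f φ))) x' := rfl
      rw [this, hσ' (pdualMap R f φ)]
      exact sub_self _
    have hTker : ∀ φ x, g x = 0 → (T φ) x = 0 := fun φ => hker (T φ) (hT φ)
    let ρfun : (X →+ AddCircle (1 : ℚ)) → (X'' →+ AddCircle (1 : ℚ)) := fun φ =>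
      Classical.choose (descend_exists g.toAddMonoidHom hg' (T φ) (hTker φ))
    have hρ : ∀ φ, (ρfun φ).comp g.toAddMonoidHom = T φ := fun φ =>
      Classical.choose_spec (descend_exists g.toAddMonoidHom hg' (T φ) (hTker φ))
    refine ⟨{ toFun := ρfun, map_add' := ?_, map_smul' := ?_ }, ?_⟩
    · intro φ ψ
      refine comp_cancel g.toAddMonoidHom hg' ?_
      rw [hρ (φ + ψ), AddMonoidHom.add_comp, hρ φ, hρ ψ]
      exact map_add T φ ψ
    · intro r φ
      simp only [RingHom.id_apply]
      refine comp_cancel g.toAddMonoidHom hg' ?_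
      have hsmulcomp : ∀ (ψ : X'' →+ AddCircle (1 : ℚ)),
          (r • ψ).comp g.toAddMonoidHom = r • (ψ.comp g.toAddMonoidHom) := by
        intro ψ
        ext x
        show ψ (MulOpposite.unop r • g x) = ψ (g (MulOpposite.unop r • x))
        exact congrArg ψ (g.map_smul _ x).symm
      rw [hρ (r • φ), hsmulcomp (ρfun φ), hρ φ]
      exact map_smul T r φ
    · refine LinearMap.ext fun ψ => ?_
      show ρfun (pdualMap R g ψ) = ψ
      refine comp_cancel g.toAddMonoidHom hg' ?_
      rw [hρ]
      have hTval : T (pdualMap R g ψ) = pdualMap R g ψ := by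
        show pdualMap R g ψ - σ (pdualMap R f (pdualMap R g ψ)) = pdualMap R g ψ
        rw [hdualgf, map_zero, sub_zero]
      rw [hTval]
      rfl

end
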